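/- (Inexact power iterates stay close to exact ones.) Let M ∈ R^{d×d} be a symmetric positive semidefinite matrix with eigenvalues λ₁ ≥ ⋯ ≥ λ_d > 0. Fix ε̃ > 0 and a unit vector w₀, and consider two sequences: ŵ*₀ = w₀ and ŵ*_t = M ŵ*_{t−1} for t ≥ 1; and ŵ₀ = w₀ and any sequence ŵ_t with ‖ŵ_t − M ŵ_{t−1}‖ ≤ ε̃ for t ≥ 1 (with ŵ_t ≠ 0). Define Γ(M,t) = (2/λ_d^t)·t if λ₁ = 1 and Γ(M,t) = (2/λ_d^t)·(λ₁^t − 1)/(λ₁ − 1) if λ₁ ≠ 1. Then for the normalized vectors w_t = ŵ_t/‖ŵ_t‖ and w*_t = ŵ*_t/‖ŵ*_t‖ it holds that ‖w_t − w*_t‖ ≤ ε̃ · Γ(M,t); moreover Γ(M,t) ≤ 2t · max{1, λ₁^t} / λ_d^t. -/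

import Mathlib

open Matrix

/-- the Euclidean norm of a real vector -/
noncomputable def evnorm {ι : Type*} [Fintype ι] (v : ι → ℝ) : ℝ := Real.sqrt (∑ i, v i ^ 2)

/-- the Euclidean dot product of two real vectors -/
def vdot {ι : Type*} [Fintype ι] (u v : ι → ℝ) : ℝ := ∑ i, u i * v i

open Classical in
/-- `Γ(M,t)` expressed through the largest eigenvalue `l1 = λ₁` and
the smallest eigenvalue `ld = λ_d` of `M`. -/
noncomputable def Gamma (l1 ld : ℝ) (t : ℕ) : ℝ :=
  if l1 = 1 then 2 / ld ^ t * t else 2 / ld ^ t * ((l1 ^ t - 1) / (l1 - 1))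

open Finset
open scoped RealInnerProductSpace

namespace AuxPI
variable {d : ℕ}

noncomputable def toE (v : Fin d → ℝ) : EuclideanSpace ℝ (Fin d) :=
  (WithLp.equiv 2 (Fin d → ℝ)).symm v

lemma toE_sub (a b : Fin d → ℝ) : toE (a - b) = toE a - toE b := rfl
lemma toE_smul (c : ℝ) (a : Fin d → ℝ) : toE (c • a) = c • toE a := rfl
lemma toE_sum {ι : Type*} (s : Finset ι) (g : ι → Fin d → ℝ) :
    toE (∑ j ∈ s, g j) = ∑ j ∈ s, toE (g j) := by
  simp only [toE, WithLp.equiv_symm_apply, WithLp.toLp_sum]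
lemma toE_ne_zero {a : Fin d → ℝ} (h : a ≠ 0) : toE a ≠ 0 := by simpa [toE, WithLp.equiv_symm_apply] using h

lemma evnorm_eq (v : Fin d → ℝ) : evnorm v = ‖toE v‖ := by
  simp [evnorm, toE, EuclideanSpace.norm_eq, Real.norm_eq_abs, sq_abs]

lemma vdot_eq (a c : Fin d → ℝ) : vdot a c = ⟪toE a, toE c⟫ := by
  simp [vdot, toE, PiLp.inner_apply, RCLike.inner_apply, mul_comm]

lemma norm_sum_sq (b : OrthonormalBasis (Fin d) ℝ (EuclideanSpace ℝ (Fin d))) (a : Fin d → ℝ) :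
    ‖∑ j, a j • b j‖ ^ 2 = ∑ j, a j ^ 2 := by
  rw [← real_inner_self_eq_norm_sq, sum_inner]
  refine Finset.sum_congr rfl fun i _ => ?_
  rw [real_inner_smul_left, b.orthonormal.inner_right_fintype, sq]

lemma norm_normalize_sub {E : Type*} [NormedAddCommGroup E] [NormedSpace ℝ E]
    (x y : E) (hx : x ≠ 0) (hy : y ≠ 0) :
    ‖‖x‖⁻¹ • x - ‖y‖⁻¹ • y‖ ≤ 2 * ‖x - y‖ / ‖y‖ := by
  have hxn : (0:ℝ) < ‖x‖ := norm_pos_iff.mpr hx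
  have hyn : (0:ℝ) < ‖y‖ := norm_pos_iff.mpr hy
  have key : ‖x‖⁻¹ • x - ‖y‖⁻¹ • y = ‖y‖⁻¹ • (x - y) + (‖x‖⁻¹ - ‖y‖⁻¹) • x := by
    module
  have e1 : ‖‖y‖⁻¹ • (x - y)‖ = ‖x - y‖ / ‖y‖ := by
    rw [norm_smul, Real.norm_eq_abs, abs_of_pos (inv_pos.mpr hyn)]
    ring
  have key2 : (‖x‖⁻¹ - ‖y‖⁻¹) * ‖x‖ = (‖y‖ - ‖x‖) / ‖y‖ := by
    field_simp
  have e2 : ‖(‖x‖⁻¹ - ‖y‖⁻¹) • x‖ ≤ ‖x - y‖ / ‖y‖ := by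
    rw [norm_smul, Real.norm_eq_abs]
    have habs : |‖x‖⁻¹ - ‖y‖⁻¹| * ‖x‖ = |(‖x‖⁻¹ - ‖y‖⁻¹) * ‖x‖| := by
      rw [abs_mul, abs_of_nonneg (norm_nonneg x)]
    rw [habs, key2, abs_div, abs_of_pos hyn]
    have h1 : |‖y‖ - ‖x‖| ≤ ‖x - y‖ := by
      calc |‖y‖ - ‖x‖| ≤ ‖y - x‖ := abs_norm_sub_norm_le y x
        _ = ‖x - y‖ := norm_sub_rev y x
    gcongr
  calc ‖‖x‖⁻¹ • x - ‖y‖⁻¹ • y‖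
      ≤ ‖‖y‖⁻¹ • (x - y)‖ + ‖(‖x‖⁻¹ - ‖y‖⁻¹) • x‖ := by rw [key]; exact norm_add_le _ _
    _ ≤ ‖x - y‖ / ‖y‖ + ‖x - y‖ / ‖y‖ := by rw [e1]; exact add_le_add le_rfl e2
    _ = 2 * ‖x - y‖ / ‖y‖ := by ring

end AuxPI

open AuxPI
set_option maxHeartbeats 1000000

/-- **inexact power iterates stay close to exact ones.** If `ŵ*` are the exact
power iterates of a symmetric PSD matrix `M` (with eigenvalues `λ₁ ≥ ⋯ ≥ λ_d > 0`) and `ŵ` are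
iterates with per-step error `ε̃`, then the normalized iterates satisfy
`‖w_t − w*_t‖ ≤ ε̃·Γ(M,t)`, and moreover `Γ(M,t) ≤ 2t·max{1, λ₁^t}/λ_d^t`. -/
theorem inexact_power_iterates_close {d : ℕ} (hd : 0 < d)
    (M : Matrix (Fin d) (Fin d) ℝ) (hM : M.IsSymm)
    (u : Fin d → Fin d → ℝ) (lam : Fin d → ℝ)
    (horth : ∀ i i', vdot (u i) (u i') = if i = i' then (1 : ℝ) else 0)
    (heig : ∀ i, M.mulVec (u i) = lam i • u i)
    (hsorted : ∀ i i' : Fin d, i ≤ i' → lam i' ≤ lam i)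
    (hpos : ∀ i, 0 < lam i)
    (εt : ℝ) (hεt : 0 < εt)
    (w₀ : Fin d → ℝ) (hw₀ : evnorm w₀ = 1)
    (wstar what : ℕ → Fin d → ℝ)
    (hstar₀ : wstar 0 = w₀)
    (hstar : ∀ t : ℕ, wstar (t + 1) = M.mulVec (wstar t))
    (hhat₀ : what 0 = w₀)
    (hhat : ∀ t : ℕ, evnorm (what (t + 1) - M.mulVec (what t)) ≤ εt)
    (hne : ∀ t : ℕ, what t ≠ 0) :
    ∀ t : ℕ,
      evnorm ((evnorm (what t))⁻¹ • what t - (evnorm (wstar t))⁻¹ • wstar t)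
        ≤ εt * Gamma (lam ⟨0, hd⟩) (lam ⟨d - 1, by omega⟩) t ∧
      Gamma (lam ⟨0, hd⟩) (lam ⟨d - 1, by omega⟩) t
        ≤ 2 * t * max 1 (lam ⟨0, hd⟩ ^ t) / lam ⟨d - 1, by omega⟩ ^ t := by
  classical
  have hd1 : d - 1 < d := by omega
  set l1 : ℝ := lam ⟨0, hd⟩ with hl1def
  set ld : ℝ := lam ⟨d - 1, hd1⟩ with hlddef
  have hl1pos : 0 < l1 := hpos _
  have hldpos : 0 < ld := hpos _
  have hle : ∀ i, ld ≤ lam i ∧ lam i ≤ l1 := fun i =>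
    ⟨hsorted i ⟨d - 1, hd1⟩ (by simp [Fin.le_def]; omega),
     hsorted ⟨0, hd⟩ i (by simp [Fin.le_def])⟩
  -- orthonormal basis
  set v : Fin d → EuclideanSpace ℝ (Fin d) := fun i => toE (u i) with hvdef
  have hon : Orthonormal ℝ v := by
    rw [orthonormal_iff_ite]
    intro i j
    rw [← vdot_eq]
    exact horth i j
  have hcard : Fintype.card (Fin d) = Module.finrank ℝ (EuclideanSpace ℝ (Fin d)) := by simp
  have : Nonempty (Fin d) := ⟨⟨0, hd⟩⟩
  set bb : Module.Basis (Fin d) ℝ (EuclideanSpace ℝ (Fin d)) :=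
    basisOfOrthonormalOfCardEqFinrank hon hcard with hbbdef
  have hbbcoe : ⇑bb = v := coe_basisOfOrthonormalOfCardEqFinrank hon hcard
  set b : OrthonormalBasis (Fin d) ℝ (EuclideanSpace ℝ (Fin d)) :=
    bb.toOrthonormalBasis (hbbcoe ▸ hon) with hbdef
  have hb : ∀ i, b i = v i := by
    intro i
    rw [hbdef, Module.Basis.coe_toOrthonormalBasis, hbbcoe]
  -- expansion of mulVec in the eigenbasis
  have hrepr : ∀ x : Fin d → ℝ,
      toE (M.mulVec x) = ∑ j, (lam j * b.repr (toE x) j) • b j := by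
    intro x
    set c : Fin d → ℝ := fun j => b.repr (toE x) j with hcdef
    have hx : toE x = ∑ j, c j • v j := by
      conv_lhs => rw [← b.sum_repr (toE x)]
      exact Finset.sum_congr rfl fun j _ => by rw [hb j]
    have hx' : x = ∑ j, c j • u j := by
        apply WithLp.toLp_injective 2
        simpa only [toE, WithLp.equiv_symm_apply, WithLp.toLp_sum, WithLp.toLp_smul, hvdef] using hx
    have hmv : M.mulVec x = ∑ j, c j • (lam j • u j) := by
      rw [hx', ← M.mulVecLin_apply, map_sum]
      refine Finset.sum_congr rfl fun j _ => ?_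
      rw [_root_.map_smul, M.mulVecLin_apply, heig j]
    calc toE (M.mulVec x) = ∑ j, toE (c j • lam j • u j) := by rw [hmv, toE_sum]
      _ = ∑ j, (lam j * c j) • b j := by
          refine Finset.sum_congr rfl fun j _ => ?_
          rw [toE_smul, toE_smul, hb j, smul_smul, mul_comm]
  -- norm bounds for mulVec
  have hnormmul : ∀ x : Fin d → ℝ,
      ‖toE (M.mulVec x)‖ ≤ l1 * ‖toE x‖ ∧ ld * ‖toE x‖ ≤ ‖toE (M.mulVec x)‖ := by
    intro x
    set c : Fin d → ℝ := fun j => b.repr (toE x) j with hcdef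
    have h1 : ‖toE (M.mulVec x)‖ ^ 2 = ∑ j, (lam j * c j) ^ 2 := by
      rw [hrepr x, norm_sum_sq]
    have h2 : ‖toE x‖ ^ 2 = ∑ j, c j ^ 2 := by
      conv_lhs => rw [← b.sum_repr (toE x)]
      exact norm_sum_sq b c
    have hub : ∑ j, (lam j * c j) ^ 2 ≤ l1 ^ 2 * ∑ j, c j ^ 2 := by
      rw [Finset.mul_sum]
      refine Finset.sum_le_sum fun j _ => ?_
      rw [mul_pow]
      exact mul_le_mul_of_nonneg_right (pow_le_pow_left₀ (hpos j).le (hle j).2 2) (sq_nonneg _)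
    have hlb : ld ^ 2 * ∑ j, c j ^ 2 ≤ ∑ j, (lam j * c j) ^ 2 := by
      rw [Finset.mul_sum]
      refine Finset.sum_le_sum fun j _ => ?_
      rw [mul_pow]
      exact mul_le_mul_of_nonneg_right (pow_le_pow_left₀ hldpos.le (hle j).1 2) (sq_nonneg _)
    constructor
    · have : ‖toE (M.mulVec x)‖ ^ 2 ≤ (l1 * ‖toE x‖) ^ 2 := by
        rw [h1, mul_pow, h2]; exact hub
      exact (pow_le_pow_iff_left₀ (norm_nonneg _)
        (by positivity) (two_ne_zero)).mp this
    · have : (ld * ‖toE x‖) ^ 2 ≤ ‖toE (M.mulVec x)‖ ^ 2 := by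
        rw [h1, mul_pow, h2]; exact hlb
      exact (pow_le_pow_iff_left₀ (by positivity) (norm_nonneg _) (two_ne_zero)).mp this
  -- geometric sum
  set S : ℕ → ℝ := fun t => ∑ k ∈ Finset.range t, l1 ^ k with hSdef
  have hSnn : ∀ t, 0 ≤ S t := fun t => Finset.sum_nonneg fun k _ => (pow_pos hl1pos k).le
  have hW : ∀ t, ld ^ t ≤ ‖toE (wstar t)‖ := by
    intro t
    induction t with
    | zero => simp [hstar₀, ← evnorm_eq, hw₀]
    | succ t ih =>
      rw [hstar t, pow_succ]
      calc ld ^ t * ld = ld * ld ^ t := by ring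
        _ ≤ ld * ‖toE (wstar t)‖ := mul_le_mul_of_nonneg_left ih hldpos.le
        _ ≤ _ := (hnormmul (wstar t)).2
  have hErr : ∀ t, ‖toE (what t) - toE (wstar t)‖ ≤ εt * S t := by
    intro t
    induction t with
    | zero => simp [hhat₀, hstar₀, hSdef]
    | succ t ih =>
      have key : toE (what (t+1)) - toE (wstar (t+1)) =
          toE (what (t+1) - M.mulVec (what t))
            + (toE (M.mulVec (what t)) - toE (M.mulVec (wstar t))) := by
        rw [toE_sub, hstar t]
        abel
      have hSsucc : S (t+1) = l1 * S t + 1 := geom_sum_succ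
      calc ‖toE (what (t+1)) - toE (wstar (t+1))‖
          ≤ ‖toE (what (t+1) - M.mulVec (what t))‖
              + ‖toE (M.mulVec (what t)) - toE (M.mulVec (wstar t))‖ := by
            rw [key]; exact norm_add_le _ _
        _ ≤ εt + l1 * (εt * S t) := by
            refine add_le_add ?_ ?_
            · rw [← evnorm_eq]; exact hhat t
            · have h1 : toE (M.mulVec (what t)) - toE (M.mulVec (wstar t))
                  = toE (M.mulVec (what t - wstar t)) := by
                rw [Matrix.mulVec_sub, toE_sub]
              rw [h1]
              calc ‖toE (M.mulVec (what t - wstar t))‖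
                  ≤ l1 * ‖toE (what t - wstar t)‖ := (hnormmul _).1
                _ ≤ l1 * (εt * S t) :=
                    mul_le_mul_of_nonneg_left (by rw [toE_sub]; exact ih) hl1pos.le
        _ = εt * S (t+1) := by rw [hSsucc]; ring
  intro t
  have hGam : Gamma l1 ld t = 2 / ld ^ t * S t := by
    unfold Gamma
    split_ifs with h
    · simp [hSdef, h]
    · rw [hSdef]
      simp only
      rw [geom_sum_eq h]
  have hWpos : (0:ℝ) < ‖toE (wstar t)‖ := lt_of_lt_of_le (pow_pos hldpos t) (hW t)
  have hwsne : toE (wstar t) ≠ 0 := by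
    intro h0
    rw [h0] at hWpos
    simp at hWpos
  constructor
  · have hmain :
        evnorm ((evnorm (what t))⁻¹ • what t - (evnorm (wstar t))⁻¹ • wstar t)
          = ‖‖toE (what t)‖⁻¹ • toE (what t) - ‖toE (wstar t)‖⁻¹ • toE (wstar t)‖ := by
      rw [evnorm_eq, toE_sub, toE_smul, toE_smul, ← evnorm_eq, ← evnorm_eq]
    show evnorm _ ≤ εt * Gamma l1 ld t
    rw [hmain, hGam]
    calc ‖‖toE (what t)‖⁻¹ • toE (what t) - ‖toE (wstar t)‖⁻¹ • toE (wstar t)‖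
        ≤ 2 * ‖toE (what t) - toE (wstar t)‖ / ‖toE (wstar t)‖ :=
          norm_normalize_sub _ _ (toE_ne_zero (hne t)) hwsne
      _ ≤ 2 * (εt * S t) / ld ^ t :=
          div_le_div₀ (mul_nonneg (by norm_num) (mul_nonneg hεt.le (hSnn t)))
            (by linarith [hErr t]) (pow_pos hldpos t) (hW t)
      _ = εt * (2 / ld ^ t * S t) := by ring
  · show Gamma l1 ld t ≤ 2 * t * max 1 (l1 ^ t) / ld ^ t
    rw [hGam]
    have hbound : S t ≤ t * max 1 (l1 ^ t) := by
      have h := Finset.sum_le_card_nsmul (Finset.range t) (fun k => l1 ^ k) (max 1 (l1 ^ t)) ?_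
      · simpa [Finset.card_range, nsmul_eq_mul, hSdef] using h
      · intro k hk
        rcases le_total l1 1 with h1 | h1
        · exact le_trans (pow_le_one₀ hl1pos.le h1) (le_max_left _ _)
        · exact le_trans (pow_le_pow_right₀ h1 (le_of_lt (Finset.mem_range.mp hk))) (le_max_right _ _)
    calc 2 / ld ^ t * S t ≤ 2 / ld ^ t * (↑t * max 1 (l1 ^ t)) :=
        mul_le_mul_of_nonneg_left hbound
          (div_nonneg (by norm_num) (pow_nonneg hldpos.le t))
      _ = 2 * ↑t * max 1 (l1 ^ t) / ld ^ t := by ring
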